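/- Let A be a complex unital Banach algebra, let x0, x1 ∈ A, and let Ω, Θ, a₀ be real numbers with a₀ ≠ 0 and Θ ≠ 0, such that ⁅x0, x1⁆ = (i*Ω) • 1. Then the centrality condition ⁅x0, exp((−2*a₀*Θ) • x1)⁆ = (−2*i*a₀) • exp((−2*a₀*Θ) • x1) holds if and only if Ω * Θ = 1. -/

import Mathlib

open NormedSpace in
/-- If `⁅a, b⁆ = z • 1`, then `⁅a, b ^ n⁆ = (n • z) • b ^ (n-1)` (stated shifted). -/
lemma lie_pow_of_lie_eq_smul_one
    {A : Type*} [NormedRing A] [NormedAlgebra ℂ A]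
    (a b : A) (z : ℂ) (h : ⁅a, b⁆ = z • (1 : A)) (n : ℕ) :
    ⁅a, b ^ (n + 1)⁆ = (((n : ℂ) + 1) * z) • b ^ n := by
  induction n with
  | zero => simpa using h
  | succ n ih =>
    have key : ⁅a, b ^ (n + 2)⁆ = ⁅a, b⁆ * b ^ (n + 1) + b * ⁅a, b ^ (n + 1)⁆ := by
      rw [Ring.lie_def, Ring.lie_def, Ring.lie_def, pow_succ' b (n+1)]
      noncomm_ring
    rw [key, ih, h]
    rw [smul_mul_assoc, one_mul, mul_smul_comm, pow_succ']
    rw [← add_smul]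
    push_cast
    ring_nf

open NormedSpace in
lemma lie_exp_of_lie_eq_smul_one
    {A : Type*} [NormedRing A] [NormedAlgebra ℂ A] [CompleteSpace A]
    (a b : A) (z : ℂ) (h : ⁅a, b⁆ = z • (1 : A)) :
    ⁅a, exp b⁆ = z • exp b := by
  classical
  set f : A →L[ℂ] A := ContinuousLinearMap.mul ℂ A a - (ContinuousLinearMap.mul ℂ A).flip a
    with hf
  have hfx : ∀ x : A, f x = ⁅a, x⁆ := by
    intro x; simp [hf, Ring.lie_def]
  have hsum : Summable fun n : ℕ => ((n.factorial : ℂ)⁻¹) • b ^ n := expSeries_summable' (𝕂 := ℂ) b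
  have h1 : f (exp b) = ∑' n : ℕ, f (((n.factorial : ℂ)⁻¹) • b ^ n) := by
    rw [exp_eq_tsum ℂ]
    exact (f.hasSum hsum.hasSum).tsum_eq.symm
  have hsum2 : Summable fun n : ℕ => f (((n.factorial : ℂ)⁻¹) • b ^ n) := hsum.map f f.continuous
  have hterm : ∀ n : ℕ, f (((((n:ℕ)+1).factorial : ℂ)⁻¹) • b ^ (n + 1)) = z • (((n.factorial : ℂ)⁻¹) • b ^ n) := by
    intro n
    rw [map_smul, hfx, lie_pow_of_lie_eq_smul_one a b z h n]
    rw [smul_smul, smul_smul]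
    congr 1
    have : ((n+1).factorial : ℂ) = ((n + 1 : ℕ) : ℂ) * (n.factorial : ℂ) := by
      push_cast [Nat.factorial_succ]; ring
    have hne : ((n + 1 : ℕ) : ℂ) ≠ 0 := by exact_mod_cast Nat.succ_ne_zero n
    have hfn : ((n.factorial : ℂ)) ≠ 0 := Nat.cast_ne_zero.mpr n.factorial_ne_zero
    rw [this, mul_inv]
    push_cast at hne
    field_simp
    push_cast
    ring
  have h0 : f ((((Nat.factorial 0 : ℂ))⁻¹) • b ^ 0) = 0 := by
    simp [hfx, Ring.lie_def]
  rw [hfx] at h1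
  rw [h1, Summable.tsum_eq_zero_add hsum2, h0, zero_add]
  simp_rw [hterm]
  rw [tsum_const_smul'' , exp_eq_tsum ℂ]

open NormedSpace in
theorem centrality_iff_MoyalWeyl
    {A : Type*} [NormedRing A] [NormOneClass A] [NormedAlgebra ℂ A] [CompleteSpace A]
    (x0 x1 : A) (Ω Θ a₀ : ℝ) (ha : a₀ ≠ 0) (hΘ : Θ ≠ 0)
    (h : ⁅x0, x1⁆ = (Complex.I * (Ω : ℂ)) • (1 : A)) :
    ⁅x0, exp ((((-2 * a₀ * Θ : ℝ) : ℂ)) • x1)⁆ =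
        ((-2 : ℂ) * Complex.I * (a₀ : ℂ)) • exp ((((-2 * a₀ * Θ : ℝ) : ℂ)) • x1)
      ↔ Ω * Θ = 1 := by
  set c : ℂ := ((-2 * a₀ * Θ : ℝ) : ℂ) with hc
  have hb : ⁅x0, c • x1⁆ = (c * (Complex.I * (Ω : ℂ))) • (1 : A) := by
    rw [Ring.lie_def] at h ⊢
    rw [mul_smul_comm, smul_mul_assoc, ← smul_sub, h, smul_smul]
  have key := lie_exp_of_lie_eq_smul_one x0 (c • x1) _ hb
  rw [key]
  have hE : IsUnit (exp (c • x1)) :=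
    isUnit_exp_of_mem_ball (𝕂 := ℂ) ((expSeries_radius_eq_top ℂ A).symm ▸ edist_lt_top _ _)
  constructor
  · intro heq
    have hz : (c * (Complex.I * (Ω : ℂ)) - (-2 : ℂ) * Complex.I * (a₀ : ℂ)) • exp (c • x1) = 0 := by
      rw [sub_smul, heq, sub_self]
    obtain ⟨u, hu⟩ := hE
    set s := c * (Complex.I * (Ω : ℂ)) - (-2 : ℂ) * Complex.I * (a₀ : ℂ) with hs
    have h1 : s • (1 : A) = 0 := by
      have := congrArg (· * (↑u⁻¹ : A)) hz
      simpa [smul_mul_assoc, ← hu, u.mul_inv] using this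
    have hs0 : s = 0 := by
      have hn := congrArg norm h1
      rw [norm_smul, norm_one, norm_zero, mul_one] at hn
      exact norm_eq_zero.mp hn
    have : c * (Complex.I * (Ω : ℂ)) = (-2 : ℂ) * Complex.I * (a₀ : ℂ) := by
      have := sub_eq_zero.mp hs0; linear_combination this
    -- deduce Ω * Θ = 1
    rw [hc] at this
    have hI : Complex.I ≠ 0 := Complex.I_ne_zero
    have ha' : (a₀ : ℂ) ≠ 0 := by exact_mod_cast ha
    have hne2 : (2 : ℂ) * Complex.I * (a₀ : ℂ) ≠ 0 := by
      simp [hI, ha']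
    have h3 : (Ω : ℂ) * (Θ : ℂ) * ((2 : ℂ) * Complex.I * (a₀ : ℂ))
        = 1 * ((2 : ℂ) * Complex.I * (a₀ : ℂ)) := by
      push_cast at this
      linear_combination -this
    have h2 : (Ω : ℂ) * (Θ : ℂ) = 1 := mul_right_cancel₀ hne2 h3
    exact_mod_cast h2
  · intro hΩΘ
    congr 1
    rw [hc]
    push_cast
    have : (Ω : ℂ) * (Θ : ℂ) = 1 := by exact_mod_cast hΩΘ
    linear_combination (-2 * Complex.I * (a₀:ℂ)) * this
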